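/- arXiv:1010.1265 — 3 statements merged into one kernel-verified Lean document; each statement's English description precedes it below -/
import Mathlib

section
/- Let ‖·‖ be a strictly convex norm on ℝ², let ℓ > 0, and let S = {z ∈ ℤ² : ‖z‖ = ℓ}. Suppose S has exactly 2m elements for some m ≥ 2. Then S = −S, every point of S is an extreme point of the convex hull of S (so the convex hull of S is a convex integer 2m-gon centrally symmetric with respect to the origin), and every lattice point z ∈ ℤ² lying in the topological interior of the convex hull of S satisfies ‖z‖ < ℓ. -/
noncomputable section

/-- The embedding of the integer lattice `ℤ²` into `ℝ²`. -/
def latticeEmbed (z : ℤ × ℤ) : ℝ × ℝ := ((z.1 : ℝ), (z.2 : ℝ))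

/-- `N` is a strictly convex norm on `ℝ²`. -/
def IsStrictlyConvexNorm (N : ℝ × ℝ → ℝ) : Prop :=
  (∀ x : ℝ × ℝ, x ≠ 0 → 0 < N x) ∧
  (∀ (c : ℝ) (x : ℝ × ℝ), N (c • x) = |c| * N x) ∧
  (∀ x y : ℝ × ℝ, N (x + y) ≤ N x + N y) ∧
  (∀ x y : ℝ × ℝ, LinearIndependent ℝ ![x, y] → N (x + y) < N x + N y)

/-- Let `‖·‖` be a strictly convex norm on `ℝ²`, `ℓ > 0`, and suppose the set `S` of
lattice points of norm exactly `ℓ` has exactly `2m` elements, `m ≥ 2`. Then `S = -S`,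
every point of `S` is an extreme point of the convex hull of `S` (so this hull is a
convex integer `2m`-gon, centrally symmetric about the origin), and every lattice point
in the interior of the convex hull of `S` has norm `< ℓ`. -/
theorem level_set_of_strictly_convex_norm_is_symmetric_gon
    (N : ℝ × ℝ → ℝ) (hN : IsStrictlyConvexNorm N)
    (ℓ : ℝ) (hℓ : 0 < ℓ) (m : ℕ) (hm : 2 ≤ m)
    (S : Set (ℤ × ℤ)) (hS : S = {z : ℤ × ℤ | N (latticeEmbed z) = ℓ})
    (hcard : S.ncard = 2 * m) :
    (∀ z : ℤ × ℤ, z ∈ S ↔ -z ∈ S) ∧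
    (∀ z ∈ S, latticeEmbed z ∈
      Set.extremePoints ℝ (convexHull ℝ (latticeEmbed '' S))) ∧
    (∀ z : ℤ × ℤ, latticeEmbed z ∈ interior (convexHull ℝ (latticeEmbed '' S)) →
      N (latticeEmbed z) < ℓ) := by
  obtain ⟨hpos, hsmul, htri, hstrict⟩ := hN
  have hN0 : N 0 = 0 := by
    have := hsmul 0 0
    simpa using this
  have hneg : ∀ x, N (-x) = N x := by
    intro x
    have := hsmul (-1) x
    simpa using this
  have hembneg : ∀ z : ℤ × ℤ, latticeEmbed (-z) = -(latticeEmbed z) := by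
    intro z
    simp [latticeEmbed, Prod.ext_iff]
  set K := convexHull ℝ (latticeEmbed '' S) with hK
  have hball : K ⊆ {y | N y ≤ ℓ} := by
    apply convexHull_min
    · rintro y ⟨z, hz, rfl⟩
      rw [hS] at hz
      exact le_of_eq hz
    · intro a ha b hb s t hs ht hst
      have h1 : N (s • a + t • b) ≤ N (s • a) + N (t • b) := htri _ _
      rw [hsmul, hsmul, abs_of_nonneg hs, abs_of_nonneg ht] at h1
      have ha' : N a ≤ ℓ := ha
      have hb' : N b ≤ ℓ := hb
      have : s * N a + t * N b ≤ ℓ := by nlinarith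
      exact le_trans h1 this
  have hextreme : ∀ z ∈ S, latticeEmbed z ∈ Set.extremePoints ℝ K := by
    intro z hz
    rw [mem_extremePoints]
    refine ⟨subset_convexHull ℝ _ ⟨z, hz, rfl⟩, ?_⟩
    intro x₁ hx₁ x₂ hx₂ hseg
    obtain ⟨t, s, ht, hs, hts, hsum⟩ := hseg
    set x := latticeEmbed z with hx
    have hNx : N x = ℓ := by rw [hS] at hz; exact hz
    have h1 : N x₁ ≤ ℓ := hball hx₁
    have h2 : N x₂ ≤ ℓ := hball hx₂
    set u := t • x₁ with hu
    set v := s • x₂ with hv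
    have huv : u + v = x := hsum
    have hNu : N u = t * N x₁ := by rw [hu, hsmul, abs_of_nonneg ht.le]
    have hNv : N v = s * N x₂ := by rw [hv, hsmul, abs_of_nonneg hs.le]
    have hge : ℓ ≤ N u + N v := by rw [← hNx, ← huv]; exact htri u v
    have hNx1 : N x₁ = ℓ := by nlinarith
    have hNx2 : N x₂ = ℓ := by nlinarith
    have hNu' : N u = t * ℓ := by rw [hNu, hNx1]
    have hNv' : N v = s * ℓ := by rw [hNv, hNx2]
    have hNupos : 0 < N u := by rw [hNu']; positivity
    have hNvpos : 0 < N v := by rw [hNv']; positivity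
    have hu0 : u ≠ 0 := by intro h; rw [h, hN0] at hNupos; exact lt_irrefl _ hNupos
    have hv0 : v ≠ 0 := by intro h; rw [h, hN0] at hNvpos; exact lt_irrefl _ hNvpos
    have hle : N u + N v ≤ ℓ := by nlinarith
    have hdep : ¬ LinearIndependent ℝ ![u, v] := by
      intro hli
      have := hstrict u v hli
      rw [huv, hNx] at this
      linarith
    obtain ⟨c, d, hcd, hne⟩ : ∃ c d : ℝ, c • u + d • v = 0 ∧ ¬(c = 0 ∧ d = 0) := by
      by_contra h
      push_neg at h
      exact hdep (LinearIndependent.pair_iff.mpr (fun c d hcd => h c d hcd))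
    have hd0 : d ≠ 0 := by
      intro hd
      rcases eq_or_ne c 0 with hc | hc
      · exact hne ⟨hc, hd⟩
      · rw [hd, zero_smul, add_zero, smul_eq_zero] at hcd
        rcases hcd with h | h
        · exact hc h
        · exact hu0 h
    obtain ⟨a, ha⟩ : ∃ a : ℝ, a = -(c / d) := ⟨_, rfl⟩
    have hva : v = a • u := by
      have h2 : d • v = -(c • u) := eq_neg_of_add_eq_zero_left (by rw [add_comm]; exact hcd)
      have h3 : v = (d⁻¹ * (-c)) • u := by
        rw [mul_smul, neg_smul, ← h2, smul_smul, inv_mul_cancel₀ hd0, one_smul]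
      rw [h3, ha]
      congr 1
      field_simp
    have hNva : N v = |a| * N u := by rw [hva, hsmul]
    have hxau : x = (1 + a) • u := by
      rw [← huv, hva]; module
    have hNxau : N x = |1 + a| * N u := by rw [hxau, hsmul]
    have habs : |1 + a| = 1 + |a| := by
      have h1 : |1 + a| * N u = N u + |a| * N u := by
        rw [← hNxau, ← hNva, hNx]; linarith
      have := hNupos
      nlinarith
    have hapos : 0 < a := by
      have hane : a ≠ 0 := by
        intro h
        rw [h, abs_zero] at hNva
        rw [hNva] at hNvpos
        simp at hNvpos
      rcases abs_cases a with ⟨h1, h2⟩ | ⟨h1, h2⟩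
      · exact lt_of_le_of_ne h2 (Ne.symm hane)
      · rcases abs_cases (1 + a) with ⟨h3, h4⟩ | ⟨h3, h4⟩ <;> rw [habs] at h3 <;> linarith
    -- x = ((1 + a) * t) • x₁
    have hx1 : x = ((1 + a) * t) • x₁ := by rw [hxau, hu, smul_smul]
    have hcoef1 : (1 + a) * t = 1 := by
      have h1 : N x = ((1 + a) * t) * N x₁ := by
        rw [hx1, hsmul, abs_of_pos (mul_pos (by linarith) ht)]
      rw [hNx, hNx1] at h1
      have h2 : ((1 + a) * t - 1) * ℓ = 0 := by linarith
      rcases mul_eq_zero.mp h2 with h3 | h3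
      · linarith
      · exact absurd h3 (ne_of_gt hℓ)
    have he1 : x₁ = x := by rw [hx1, hcoef1, one_smul]
    have huav : u = a⁻¹ • v := by
      rw [hva, smul_smul, inv_mul_cancel₀ (ne_of_gt hapos), one_smul]
    have hx2 : x = ((1 + a⁻¹) * s) • x₂ := by
      rw [← huv, huav, hv]
      module
    have hcoef2 : (1 + a⁻¹) * s = 1 := by
      have hainv : 0 < a⁻¹ := inv_pos.mpr hapos
      have h1 : N x = ((1 + a⁻¹) * s) * N x₂ := by
        rw [hx2, hsmul, abs_of_pos (mul_pos (by linarith) hs)]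
      rw [hNx, hNx2] at h1
      have h2 : ((1 + a⁻¹) * s - 1) * ℓ = 0 := by linarith
      rcases mul_eq_zero.mp h2 with h3 | h3
      · linarith
      · exact absurd h3 (ne_of_gt hℓ)
    have he2 : x₂ = x := by rw [hx2, hcoef2, one_smul]
    exact ⟨he1, he2⟩
  refine ⟨?_, hextreme, ?_⟩
  · intro z
    rw [hS]
    simp only [Set.mem_setOf_eq, hembneg, hneg]
  · intro z hzint
    by_contra h
    push_neg at h
    have hle' : N (latticeEmbed z) ≤ ℓ := hball (interior_subset hzint)
    have heq : N (latticeEmbed z) = ℓ := le_antisymm hle' h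
    have hzS : z ∈ S := by rw [hS]; exact heq
    have hext := hextreme z hzS
    rw [mem_extremePoints] at hext
    set x := latticeEmbed z with hx
    rw [mem_interior_iff_mem_nhds, Metric.mem_nhds_iff] at hzint
    obtain ⟨ε, hε, hball'⟩ := hzint
    set dd : ℝ × ℝ := (ε / 2, 0) with hdd
    have hdist : ∀ y : ℝ × ℝ, dist (x + y) x = ‖y‖ := by
      intro y
      rw [dist_eq_norm]
      simp
    have hnd : ‖dd‖ = ε / 2 := by
      rw [hdd, Prod.norm_def]
      simp only [Real.norm_eq_abs, abs_div]
      rw [abs_of_pos hε]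
      simp
      linarith
    have hmem1 : x + dd ∈ K := by
      apply hball'
      rw [Metric.mem_ball, hdist, hnd]
      linarith
    have hmem2 : x + (-dd) ∈ K := by
      apply hball'
      rw [Metric.mem_ball, hdist]
      rw [norm_neg, hnd]
      linarith
    have hseg : x ∈ openSegment ℝ (x + dd) (x + (-dd)) := by
      refine ⟨1/2, 1/2, by norm_num, by norm_num, by norm_num, ?_⟩
      module
    have := (hext.2 (x + dd) hmem1 (x + (-dd)) hmem2 hseg).1
    have hdd0 : dd = 0 := by
      have h0 : x + dd = x + 0 := by rw [add_zero]; exact this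
      exact add_left_cancel h0
    rw [hdd] at hdd0
    have : ε / 2 = 0 := congrArg Prod.fst hdd0
    linarith

end
end

section
/- Let ‖·‖ be a strictly convex norm on ℝ², let ℓ > 0, and suppose that exactly 2m points z ∈ ℤ² satisfy ‖z‖ = ℓ, for some m ≥ 2. Then the number of lattice points z ∈ ℤ² with ‖z‖ < ℓ is at least i₀^symm(2m). -/
noncomputable section

/-- `P ⊆ ℝ²` is a convex integer `k`-gon: the convex hull of a set `V` of `k` lattice
points, each of which is an extreme point of `P`. -/
def IsConvexIntegerGon (k : ℕ) (P : Set (ℝ × ℝ)) : Prop :=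
  ∃ V : Finset (ℤ × ℤ), V.card = k ∧ P = convexHull ℝ (latticeEmbed '' ↑V) ∧
    ∀ z ∈ V, latticeEmbed z ∈ Set.extremePoints ℝ P

/-- `i(P)`: the number of lattice points in the topological interior of `P`. -/
def interiorLatticeCount (P : Set (ℝ × ℝ)) : ℕ :=
  {z : ℤ × ℤ | latticeEmbed z ∈ interior P}.ncard

/-- `i₀^symm(k)`: the minimum number of interior lattice points of a convex integer
`k`-gon that is centrally symmetric with respect to the origin `(0,0)`. -/
def minInteriorLatticeCountSymm (k : ℕ) : ℕ :=
  sInf {i : ℕ | ∃ P : Set (ℝ × ℝ), IsConvexIntegerGon k P ∧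
    (∀ x, x ∈ P ↔ -x ∈ P) ∧ interiorLatticeCount P = i}

lemma latticeEmbed_neg (z : ℤ × ℤ) : latticeEmbed (-z) = -latticeEmbed z := by
  simp [latticeEmbed, Prod.ext_iff]

/-- If a strictly convex norm on `ℝ²` takes the value `ℓ > 0` at exactly `2m` lattice
points (`m ≥ 2`), then the number of lattice points of norm `< ℓ` is at least
`i₀^symm(2m)`. -/
theorem count_lattice_points_below_level_ge_minInteriorLatticeCountSymm
    (N : ℝ × ℝ → ℝ) (hN : IsStrictlyConvexNorm N)
    (ℓ : ℝ) (hℓ : 0 < ℓ) (m : ℕ) (hm : 2 ≤ m)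
    (hcard : {z : ℤ × ℤ | N (latticeEmbed z) = ℓ}.ncard = 2 * m) :
    minInteriorLatticeCountSymm (2 * m) ≤ {z : ℤ × ℤ | N (latticeEmbed z) < ℓ}.ncard := by
  obtain ⟨hpos, hhom, htri, hstrict⟩ := hN
  have hN0 : N 0 = 0 := by
    have := hhom 0 0; simpa using this
  have hNneg : ∀ x, N (-x) = N x := fun x => by
    have := hhom (-1) x; simpa using this
  have hNnonneg : ∀ x, 0 ≤ N x := by
    intro x
    rcases eq_or_ne x 0 with h | h
    · simp [h, hN0]
    · exact (hpos x h).le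
  -- upper bound by the sup norm
  have hub : ∀ x : ℝ × ℝ, N x ≤ (N (1, 0) + N (0, 1)) * ‖x‖ := by
    intro x
    have hx : x = x.1 • ((1 : ℝ), (0 : ℝ)) + x.2 • ((0 : ℝ), (1 : ℝ)) := by
      simp [Prod.ext_iff]
    have h1 : N x ≤ N (x.1 • ((1 : ℝ), (0 : ℝ))) + N (x.2 • ((0 : ℝ), (1 : ℝ))) := by
      nth_rewrite 1 [hx]; exact htri _ _
    rw [hhom, hhom] at h1
    have hf : |x.1| ≤ ‖x‖ := by
      simpa [Real.norm_eq_abs] using norm_fst_le x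
    have hs : |x.2| ≤ ‖x‖ := by
      simpa [Real.norm_eq_abs] using norm_snd_le x
    nlinarith [hNnonneg ((1 : ℝ), (0 : ℝ)), hNnonneg ((0 : ℝ), (1 : ℝ)), abs_nonneg x.1,
      abs_nonneg x.2]
  -- continuity
  have hcont : Continuous N := by
    have hlip : LipschitzWith (Real.toNNReal (N (1, 0) + N (0, 1))) N := by
      apply LipschitzWith.of_dist_le_mul
      intro x y
      have h6 : ((Real.toNNReal (N (1, 0) + N (0, 1)) : NNReal) : ℝ)
          = N (1, 0) + N (0, 1) :=
        Real.coe_toNNReal _ (add_nonneg (hNnonneg _) (hNnonneg _))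
      rw [h6]
      have h1 : N x - N y ≤ N (x - y) := by
        have := htri (x - y) y; simp at this; linarith
      have h2 : N y - N x ≤ N (x - y) := by
        have := htri (y - x) x
        simp at this
        have h3 : N (y - x) = N (x - y) := by
          rw [show y - x = -(x - y) by ring, hNneg]
        linarith
      have h4 : dist (N x) (N y) ≤ N (x - y) := by
        rw [Real.dist_eq, abs_sub_le_iff]; exact ⟨h1, h2⟩
      have h5 : N (x - y) ≤ (N (1, 0) + N (0, 1)) * dist x y := by
        rw [dist_eq_norm]; exact hub _
      exact le_trans h4 h5
    exact hlip.continuous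
  -- lower bound
  obtain ⟨c, hc, hlb⟩ : ∃ c > 0, ∀ x : ℝ × ℝ, c * ‖x‖ ≤ N x := by
    have hne : (Metric.sphere (0 : ℝ × ℝ) 1).Nonempty := by
      refine ⟨((1 : ℝ), (0 : ℝ)), ?_⟩
      simp [Prod.norm_def]
    obtain ⟨x₀, hx₀, hmin⟩ := (isCompact_sphere (0 : ℝ × ℝ) 1).exists_isMinOn hne
      hcont.continuousOn
    have hx₀n : ‖x₀‖ = 1 := by simpa using hx₀
    have hx₀0 : x₀ ≠ 0 := by
      intro h; rw [h] at hx₀n; simp at hx₀n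
    refine ⟨N x₀, hpos _ hx₀0, fun x => ?_⟩
    rcases eq_or_ne x 0 with rfl | hx0
    · simp [hN0, hNnonneg]
    · have hxn : ‖x‖ ≠ 0 := norm_ne_zero_iff.mpr hx0
      have hu : ‖x‖⁻¹ • x ∈ Metric.sphere (0 : ℝ × ℝ) 1 := by
        simp [norm_smul, abs_of_nonneg (inv_nonneg.mpr (norm_nonneg x)),
          inv_mul_cancel₀ hxn]
      have h1 : N x₀ ≤ N (‖x‖⁻¹ • x) := hmin hu
      have h2 : N (‖x‖⁻¹ • x) = ‖x‖⁻¹ * N x := by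
        rw [hhom, abs_of_nonneg (inv_nonneg.mpr (norm_nonneg x))]
      have hxpos : 0 < ‖x‖ := (norm_nonneg x).lt_of_ne' hxn
      rw [h2] at h1
      calc N x₀ * ‖x‖ ≤ (‖x‖⁻¹ * N x) * ‖x‖ := by nlinarith
        _ = N x := by field_simp
  -- finiteness of the sublevel set
  have hfin_le : {z : ℤ × ℤ | N (latticeEmbed z) ≤ ℓ}.Finite := by
    set M : ℤ := ⌈ℓ / c⌉ with hM
    apply Set.Finite.subset (Finset.Icc ((-M, -M) : ℤ × ℤ) (M, M)).finite_toSet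
    intro z hz
    simp only [Set.mem_setOf_eq] at hz
    have h1 : c * ‖latticeEmbed z‖ ≤ ℓ := le_trans (hlb _) hz
    have h2 : ‖latticeEmbed z‖ ≤ ℓ / c := by
      rw [le_div_iff₀ hc]; linarith
    have hf : |(z.1 : ℝ)| ≤ ℓ / c := by
      have h3 : ‖(latticeEmbed z).1‖ ≤ ‖latticeEmbed z‖ := norm_fst_le _
      rw [show (latticeEmbed z).1 = (z.1 : ℝ) from rfl, Real.norm_eq_abs] at h3
      linarith
    have hs : |(z.2 : ℝ)| ≤ ℓ / c := by
      have h3 : ‖(latticeEmbed z).2‖ ≤ ‖latticeEmbed z‖ := norm_snd_le _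
      rw [show (latticeEmbed z).2 = (z.2 : ℝ) from rfl, Real.norm_eq_abs] at h3
      linarith
    have hMc : ℓ / c ≤ (M : ℝ) := Int.le_ceil _
    rw [abs_le] at hf hs
    simp only [Finset.coe_Icc, Set.mem_Icc, Prod.le_def]
    refine ⟨⟨?_, ?_⟩, ?_, ?_⟩
    · exact_mod_cast (by linarith [hf.1] : (-(M : ℝ)) ≤ (z.1 : ℝ))
    · exact_mod_cast (by linarith [hs.1] : (-(M : ℝ)) ≤ (z.2 : ℝ))
    · exact_mod_cast (by linarith [hf.2] : ((z.1 : ℝ)) ≤ (M : ℝ))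
    · exact_mod_cast (by linarith [hs.2] : ((z.2 : ℝ)) ≤ (M : ℝ))
  have hSfin : {z : ℤ × ℤ | N (latticeEmbed z) = ℓ}.Finite :=
    hfin_le.subset fun z hz => le_of_eq hz
  have hfin_lt : {z : ℤ × ℤ | N (latticeEmbed z) < ℓ}.Finite :=
    hfin_le.subset fun z hz => le_of_lt (show N (latticeEmbed z) < ℓ from hz)
  set V : Finset (ℤ × ℤ) := hSfin.toFinset with hVdef
  have hmemV : ∀ z : ℤ × ℤ, z ∈ V ↔ N (latticeEmbed z) = ℓ := by
    intro z; rw [hVdef, Set.Finite.mem_toFinset]; rfl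
  have hVcard : V.card = 2 * m := by
    rw [← hcard, Set.ncard_eq_toFinset_card _ hSfin]
  set P : Set (ℝ × ℝ) := convexHull ℝ (latticeEmbed '' ↑V) with hPdef
  -- the closed ball is convex
  have hball : Convex ℝ {x : ℝ × ℝ | N x ≤ ℓ} := by
    intro x hx y hy a b ha hb hab
    simp only [Set.mem_setOf_eq] at hx hy ⊢
    have h1 := htri (a • x) (b • y)
    rw [hhom, hhom, abs_of_nonneg ha, abs_of_nonneg hb] at h1
    nlinarith
  have hPsub : P ⊆ {x : ℝ × ℝ | N x ≤ ℓ} := by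
    rw [hPdef]
    apply convexHull_min _ hball
    rintro x ⟨z, hz, rfl⟩
    have : N (latticeEmbed z) = ℓ := (hmemV z).mp hz
    exact le_of_eq this
  -- symmetry
  have himg : -(latticeEmbed '' (↑V : Set (ℤ × ℤ))) = latticeEmbed '' ↑V := by
    ext x
    simp only [Set.mem_neg, Set.mem_image, Finset.mem_coe]
    constructor
    · rintro ⟨z, hz, hzx⟩
      refine ⟨-z, ?_, ?_⟩
      · rw [hmemV, latticeEmbed_neg, hNneg]; exact (hmemV z).mp hz
      · rw [latticeEmbed_neg, hzx, neg_neg]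
    · rintro ⟨z, hz, rfl⟩
      refine ⟨-z, ?_, ?_⟩
      · rw [hmemV, latticeEmbed_neg, hNneg]; exact (hmemV z).mp hz
      · rw [latticeEmbed_neg]
  have hPneg : -P = P := by
    rw [hPdef, ← convexHull_neg, himg]
  have hsymm : ∀ x, x ∈ P ↔ -x ∈ P := by
    intro x
    constructor
    · intro hx
      have h1 : -x ∈ -P := Set.mem_neg.mpr (by rwa [neg_neg])
      rwa [hPneg] at h1
    · intro hx
      have h1 : -x ∈ -P := by rw [hPneg]; exact hx
      have h2 := Set.mem_neg.mp h1
      rwa [neg_neg] at h2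
  -- extreme points
  have hext : ∀ z ∈ V, latticeEmbed z ∈ Set.extremePoints ℝ P := by
    intro z hz
    set x : ℝ × ℝ := latticeEmbed z with hxdef
    have hxℓ : N x = ℓ := (hmemV z).mp hz
    refine mem_extremePoints.mpr ⟨subset_convexHull ℝ _ ⟨z, by simpa using hz, rfl⟩, ?_⟩
    intro x₁ hx₁ x₂ hx₂ hseg
    obtain ⟨a, b, ha, hb, hab, hsum⟩ := hseg
    have hN1 : N x₁ ≤ ℓ := hPsub hx₁
    have hN2 : N x₂ ≤ ℓ := hPsub hx₂
    have htr : N (a • x₁ + b • x₂) ≤ a * N x₁ + b * N x₂ := by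
      have h1 := htri (a • x₁) (b • x₂)
      rw [hhom, hhom, abs_of_pos ha, abs_of_pos hb] at h1
      exact h1
    have hkey : N (a • x₁ + b • x₂) = ℓ := by rw [hsum, hxℓ]
    have heq : a * N x₁ + b * N x₂ = ℓ := by nlinarith
    have hNx₁ : N x₁ = ℓ := le_antisymm hN1 (by nlinarith)
    have hNx₂ : N x₂ = ℓ := le_antisymm hN2 (by nlinarith)
    have hx₂0 : x₂ ≠ 0 := by
      intro h0; rw [h0, hN0] at hNx₂; linarith
    have hdep : ¬ LinearIndependent ℝ ![a • x₁, b • x₂] := by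
      intro hli
      have := hstrict _ _ hli
      rw [hhom, hhom, abs_of_pos ha, abs_of_pos hb] at this
      linarith [hkey ▸ this]
    rw [linearIndependent_fin2] at hdep
    push_neg at hdep
    simp only [Matrix.cons_val_one, Matrix.head_cons, Matrix.cons_val_zero] at hdep
    have hb0 : b • x₂ ≠ 0 := smul_ne_zero hb.ne' hx₂0
    obtain ⟨t, ht⟩ := hdep hb0
    have hx₁eq : x₁ = (t * b / a) • x₂ := by
      have h1 : a • x₁ = (t * b) • x₂ := by rw [← ht, smul_smul]
      have h2 : x₁ = (a⁻¹ * (t * b)) • x₂ := by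
        calc x₁ = a⁻¹ • (a • x₁) := by
              rw [smul_smul, inv_mul_cancel₀ ha.ne', one_smul]
          _ = a⁻¹ • ((t * b) • x₂) := by rw [h1]
          _ = (a⁻¹ * (t * b)) • x₂ := by rw [smul_smul]
      rw [div_eq_inv_mul]
      exact h2
    set s : ℝ := t * b / a with hsdef
    have hNs : ℓ = |s| * ℓ := by
      have h1 : N x₁ = |s| * N x₂ := by rw [hx₁eq, hhom]
      rw [hNx₁, hNx₂] at h1
      exact h1
    have habs : |s| = 1 := by
      have : (1 : ℝ) * ℓ = |s| * ℓ := by linarith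
      exact (mul_right_cancel₀ hℓ.ne' this).symm
    rcases (abs_eq (by norm_num : (0:ℝ) ≤ 1)).mp habs with hs1 | hneg
    · -- s = 1 : x₁ = x₂
      have h12 : x₁ = x₂ := by rw [hx₁eq, hs1, one_smul]
      have hxeq : x = x₂ := by
        rw [← hsum, h12, ← add_smul, hab, one_smul]
      exact ⟨h12.trans hxeq.symm, hxeq.symm⟩
    · -- s = -1 : contradiction
      exfalso
      have h12 : x₁ = -x₂ := by rw [hx₁eq, hneg]; simp
      have hxeq : a • x₁ + b • x₂ = (b - a) • x₂ := by
        rw [h12]; module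
      have hNx : N ((b - a) • x₂) = ℓ := by rw [← hxeq, hkey]
      rw [hhom, hNx₂] at hNx
      have : |b - a| = 1 := by
        have h1 : (1 : ℝ) * ℓ = |b - a| * ℓ := by linarith
        exact (mul_right_cancel₀ hℓ.ne' h1).symm
      have h2 : |b - a| < 1 := by
        rw [abs_lt]; constructor <;> linarith
      linarith
  -- interior points have norm < ℓ
  have hint : ∀ x ∈ interior P, N x < ℓ := by
    intro x hx
    have hxle : N x ≤ ℓ := hPsub (interior_subset hx)
    rcases lt_or_eq_of_le hxle with h | h
    · exact h
    exfalso
    have hx0 : x ≠ 0 := by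
      intro h0; rw [h0, hN0] at h; linarith
    have hxn : 0 < ‖x‖ := norm_pos_iff.mpr hx0
    obtain ⟨ε, hε, hballx⟩ := Metric.isOpen_iff.mp isOpen_interior x hx
    set δ : ℝ := ε / (2 * ‖x‖) with hδdef
    have hδ : 0 < δ := by positivity
    have hx' : (1 + δ) • x ∈ Metric.ball x ε := by
      rw [Metric.mem_ball, dist_eq_norm]
      have h1 : (1 + δ) • x - x = δ • x := by module
      rw [h1, norm_smul, Real.norm_eq_abs, abs_of_pos hδ]
      rw [hδdef]
      rw [div_mul_eq_mul_div]
      rw [div_lt_iff₀ (by positivity)]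
      nlinarith
    have h2 : N ((1 + δ) • x) ≤ ℓ := hPsub (interior_subset (hballx hx'))
    rw [hhom, abs_of_pos (by linarith), ← h] at h2
    nlinarith [hpos x hx0]
  have hsub2 : {z : ℤ × ℤ | latticeEmbed z ∈ interior P}
      ⊆ {z : ℤ × ℤ | N (latticeEmbed z) < ℓ} := fun z hz => hint _ hz
  have hle2 : interiorLatticeCount P ≤ {z : ℤ × ℤ | N (latticeEmbed z) < ℓ}.ncard :=
    Set.ncard_le_ncard hsub2 hfin_lt
  refine le_trans (Nat.sInf_le ?_) hle2
  exact ⟨P, ⟨V, hVcard, rfl, hext⟩, hsymm, rfl⟩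

end
end

section
/- Let m ≥ 2 and let Q ⊆ ℝ² be a convex integer 2m-gon that is centrally symmetric with respect to the origin and whose topological boundary contains no points of ℤ² other than its 2m vertices. Then there exists a compact convex set B ⊆ ℝ² such that B = −B, the origin lies in the topological interior of B, B is strictly convex (for all distinct x, y ∈ B and t ∈ (0,1), t·x + (1−t)·y lies in the interior of B), Q ⊆ B, and B ∩ ℤ² = Q ∩ ℤ². -/
noncomputable section

lemma latticeEmbed_injective : Function.Injective latticeEmbed := by
  intro z w h
  simp only [latticeEmbed, Prod.ext_iff] at h ⊢
  exact ⟨by exact_mod_cast h.1, by exact_mod_cast h.2⟩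

/-- A point strictly between two points on a line is in the open segment. -/
lemma mem_openSegment_of_between (v p : ℝ × ℝ) {rx ry rz : ℝ}
    (h1 : rx < ry) (h2 : ry < rz) :
    (ry • v + p) ∈ openSegment ℝ (rx • v + p) (rz • v + p) := by
  have hzx : 0 < rz - rx := by linarith
  refine ⟨(rz - ry) / (rz - rx), (ry - rx) / (rz - rx),
    div_pos (by linarith) hzx, div_pos (by linarith) hzx, ?_, ?_⟩
  · field_simp; ring
  · apply Prod.ext <;>
    · simp only [Prod.smul_fst, Prod.smul_snd, Prod.fst_add, Prod.snd_add, smul_eq_mul]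
      field_simp
      ring

/-- Extreme point cannot be strictly between two points. -/
lemma extreme_not_middle {Q : Set (ℝ × ℝ)} {x y z : ℝ × ℝ}
    (hy : y ∈ Set.extremePoints ℝ Q) (hx : x ∈ Q) (hz : z ∈ Q) (hxy : x ≠ y)
    (v p : ℝ × ℝ) {rx ry rz : ℝ}
    (hhx : x = rx • v + p) (hhy : y = ry • v + p) (hhz : z = rz • v + p)
    (h1 : rx < ry) (h2 : ry < rz) : False := by
  have hmem : y ∈ openSegment ℝ x z := by
    rw [hhx, hhy, hhz]; exact mem_openSegment_of_between v p h1 h2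
  exact hxy (hy.2 hx hz hmem)

set_option maxHeartbeats 2000000 in
/-- Given a convex integer `2m`-gon `Q` (`m ≥ 2`), centrally symmetric with respect to
the origin, whose boundary contains no lattice points other than its `2m` vertices,
there is a compact, origin-symmetric, strictly convex body `B` with `0` in its interior
such that `Q ⊆ B` and `B` meets the lattice exactly where `Q` does. -/
theorem exists_strictly_convex_body_through_vertices
    (m : ℕ) (hm : 2 ≤ m)
    (Q : Set (ℝ × ℝ)) (V : Finset (ℤ × ℤ))
    (hVcard : V.card = 2 * m)
    (hQ : Q = convexHull ℝ (latticeEmbed '' ↑V))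
    (hext : ∀ z ∈ V, latticeEmbed z ∈ Set.extremePoints ℝ Q)
    (hsymm : ∀ x : ℝ × ℝ, x ∈ Q ↔ -x ∈ Q)
    (hbdry : ∀ z : ℤ × ℤ, latticeEmbed z ∈ frontier Q → z ∈ V) :
    ∃ B : Set (ℝ × ℝ),
      IsCompact B ∧ Convex ℝ B ∧
      (∀ x : ℝ × ℝ, x ∈ B ↔ -x ∈ B) ∧
      (0 : ℝ × ℝ) ∈ interior B ∧
      (∀ x ∈ B, ∀ y ∈ B, x ≠ y → ∀ t : ℝ, t ∈ Set.Ioo (0 : ℝ) 1 →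
        t • x + (1 - t) • y ∈ interior B) ∧
      Q ⊆ B ∧
      (∀ z : ℤ × ℤ, latticeEmbed z ∈ B ↔ latticeEmbed z ∈ Q) := by
  -- Basic properties of Q
  have hQconv : Convex ℝ Q := hQ ▸ convex_convexHull ℝ _
  have hQcomp : IsCompact Q := hQ ▸ (V.finite_toSet.image _).isCompact_convexHull ℝ
  have hQclosed : IsClosed Q := hQcomp.isClosed
  have hsubQ : ∀ z ∈ V, latticeEmbed z ∈ Q := fun z hz =>
    hQ ▸ subset_convexHull ℝ _ ⟨z, hz, rfl⟩
  -- Three distinct vertices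
  have h3 : 2 < V.card := by omega
  obtain ⟨a, b, c, ha, hb, hc, hab, hac, hbc⟩ := Finset.two_lt_card_iff.mp h3
  have hA : latticeEmbed a ∈ Q := hsubQ a ha
  have hB : latticeEmbed b ∈ Q := hsubQ b hb
  have hC : latticeEmbed c ∈ Q := hsubQ c hc
  have hAB : latticeEmbed a ≠ latticeEmbed b := fun h => hab (latticeEmbed_injective h)
  have hAC : latticeEmbed a ≠ latticeEmbed c := fun h => hac (latticeEmbed_injective h)
  have hBC : latticeEmbed b ≠ latticeEmbed c := fun h => hbc (latticeEmbed_injective h)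
  -- Q is not collinear
  have hncol : ¬ Collinear ℝ Q := by
    intro hcol
    obtain ⟨p, v, hpv⟩ := (collinear_iff_exists_forall_eq_smul_vadd Q).mp hcol
    obtain ⟨rA, hrA⟩ := hpv _ hA
    obtain ⟨rB, hrB⟩ := hpv _ hB
    obtain ⟨rC, hrC⟩ := hpv _ hC
    rw [vadd_eq_add] at hrA hrB hrC
    have hrAB : rA ≠ rB := fun h => hAB (by rw [hrA, hrB, h])
    have hrAC : rA ≠ rC := fun h => hAC (by rw [hrA, hrC, h])
    have hrBC : rB ≠ rC := fun h => hBC (by rw [hrB, hrC, h])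
    rcases lt_trichotomy rA rB with h1 | h1 | h1
    · rcases lt_trichotomy rB rC with h2 | h2 | h2
      · exact extreme_not_middle (hext b hb) hA hC hAB v p hrA hrB hrC h1 h2
      · exact hrBC h2
      · rcases lt_trichotomy rA rC with h3' | h3' | h3'
        · exact extreme_not_middle (hext c hc) hA hB hAC v p hrA hrC hrB h3' h2
        · exact hrAC h3'
        · exact extreme_not_middle (hext a ha) hC hB (Ne.symm hAC) v p hrC hrA hrB h3' h1
    · exact hrAB h1
    · rcases lt_trichotomy rA rC with h2 | h2 | h2
      · exact extreme_not_middle (hext a ha) hB hC (Ne.symm hAB) v p hrB hrA hrC h1 h2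
      · exact hrAC h2
      · rcases lt_trichotomy rB rC with h3' | h3' | h3'
        · exact extreme_not_middle (hext c hc) hB hA hBC v p hrB hrC hrA h3' h2
        · exact hrBC h3'
        · exact extreme_not_middle (hext b hb) hC hA (Ne.symm hBC) v p hrC hrB hrA h3' h1
  -- affine span is everything
  have hQne : Q.Nonempty := ⟨_, hA⟩
  have hspan : affineSpan ℝ Q = ⊤ := by
    rw [AffineSubspace.affineSpan_eq_top_iff_vectorSpan_eq_top_of_nonempty ℝ (ℝ × ℝ) (ℝ × ℝ) hQne]
    by_contra h
    apply hncol
    rw [collinear_iff_finrank_le_one]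
    have hle : Module.finrank ℝ (vectorSpan ℝ Q) ≤ 2 := by
      have := Submodule.finrank_le (vectorSpan ℝ Q)
      simpa [Module.finrank_prod] using this
    rcases Nat.lt_or_ge (Module.finrank ℝ (vectorSpan ℝ Q)) 2 with h' | h'
    · omega
    · exfalso
      apply h
      apply Submodule.eq_top_of_finrank_eq
      have : Module.finrank ℝ (ℝ × ℝ) = 2 := by simp [Module.finrank_prod]
      omega
  -- 0 is in the interior of Q
  obtain ⟨u, hu⟩ := (hQconv.interior_nonempty_iff_affineSpan_eq_top).mpr hspan
  have h0int : (0 : ℝ × ℝ) ∈ interior Q := by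
    have hmu : -u ∈ Q := (hsymm u).mp (interior_subset hu)
    have := hQconv.combo_interior_self_mem_interior hu hmu
      (by norm_num : (0:ℝ) < 1/2) (by norm_num : (0:ℝ) ≤ 1/2) (by norm_num)
    simpa [smul_neg] using this
  have hQnhds : Q ∈ nhds (0 : ℝ × ℝ) := mem_interior_iff_mem_nhds.mp h0int
  have habs : Absorbent ℝ Q := absorbent_nhds_zero hQnhds
  -- the gauge
  obtain ⟨μ, hμeq⟩ : ∃ μ : (ℝ × ℝ) → ℝ, ∀ x, μ x = gauge Q x := ⟨_, fun _ => rfl⟩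
  have hμcont : Continuous μ := by
    have := continuous_gauge hQconv hQnhds
    simpa [funext hμeq] using this
  have hμnonneg : ∀ x, 0 ≤ μ x := fun x => (hμeq x) ▸ gauge_nonneg x
  have hμzero : μ 0 = 0 := (hμeq 0) ▸ gauge_zero
  have hμmem : ∀ x ∈ Q, μ x ≤ 1 := fun x hx => (hμeq x) ▸ gauge_le_one_of_mem hx
  have hμnot : ∀ x : ℝ × ℝ, x ∉ Q → 1 < μ x := by
    intro x hx
    rw [hμeq]
    by_contra h
    push_neg at h
    exact hx (hQclosed.closure_eq ▸ (gauge_le_one_iff_mem_closure hQconv hQnhds).mp h)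
  have hμcomb : ∀ (x y : ℝ × ℝ) (t : ℝ), 0 ≤ t → t ≤ 1 →
      μ (t • x + (1 - t) • y) ≤ t * μ x + (1 - t) * μ y := by
    intro x y t ht ht1
    simp only [hμeq]
    calc gauge Q (t • x + (1 - t) • y) ≤ gauge Q (t • x) + gauge Q ((1 - t) • y) :=
          gauge_add_le hQconv habs _ _
      _ = t * gauge Q x + (1 - t) * gauge Q y := by
          rw [gauge_smul_of_nonneg ht, gauge_smul_of_nonneg (by linarith : (0:ℝ) ≤ 1 - t)]
          simp [smul_eq_mul]
  have hμneg : ∀ x : ℝ × ℝ, μ (-x) = μ x := by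
    intro x
    simp only [hμeq]
    exact gauge_neg (fun y hy => (hsymm y).mp hy) x
  -- the quadratic form
  obtain ⟨q, hqeq⟩ : ∃ q : (ℝ × ℝ) → ℝ, ∀ x, q x = x.1 ^ 2 + x.2 ^ 2 := ⟨_, fun _ => rfl⟩
  have hqcont : Continuous q := by
    have : Continuous fun x : ℝ × ℝ => x.1 ^ 2 + x.2 ^ 2 := by fun_prop
    simpa [funext hqeq] using this
  have hqnonneg : ∀ x, 0 ≤ q x := fun x => by rw [hqeq]; positivity
  have hq_combo : ∀ (x y : ℝ × ℝ) (t : ℝ),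
      q (t • x + (1 - t) • y) = t * q x + (1 - t) * q y
        - t * (1 - t) * ((x.1 - y.1) ^ 2 + (x.2 - y.2) ^ 2) := by
    intro x y t
    simp only [hqeq, Prod.smul_fst, Prod.smul_snd, Prod.fst_add, Prod.snd_add, smul_eq_mul]
    ring
  have hqneg : ∀ x : ℝ × ℝ, q (-x) = q x := by
    intro x; simp [hqeq]
  -- the bound R
  obtain ⟨R, hR1, hqR⟩ : ∃ R : ℝ, 1 ≤ R ∧ ∀ x ∈ Q, q x ≤ R := by
    obtain ⟨w, hwQ, hwmax⟩ := hQcomp.exists_isMaxOn hQne hqcont.continuousOn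
    exact ⟨max (q w) 1, le_max_right _ _, fun x hx => le_trans (hwmax hx) (le_max_left _ _)⟩
  have hRpos : 0 < R := by linarith
  -- the finite bad set
  have hSfin : Set.Finite {z : ℤ × ℤ | latticeEmbed z ∉ Q ∧ q (latticeEmbed z) ≤ R} := by
    have hsub : {z : ℤ × ℤ | latticeEmbed z ∉ Q ∧ q (latticeEmbed z) ≤ R} ⊆
        Set.Icc (-⌈R⌉, -⌈R⌉) (⌈R⌉, ⌈R⌉) := by
      rintro z ⟨_, hz⟩
      rw [hqeq] at hz
      simp only [latticeEmbed] at hz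
      have h1 : ((z.1 : ℝ)) ^ 2 ≤ R := by nlinarith [sq_nonneg ((z.2 : ℝ))]
      have h2 : ((z.2 : ℝ)) ^ 2 ≤ R := by nlinarith [sq_nonneg ((z.1 : ℝ))]
      have hb1 : |(z.1 : ℝ)| ≤ R := by nlinarith [abs_nonneg ((z.1:ℝ)), sq_abs ((z.1:ℝ))]
      have hb2 : |(z.2 : ℝ)| ≤ R := by nlinarith [abs_nonneg ((z.2:ℝ)), sq_abs ((z.2:ℝ))]
      have hRc : R ≤ (⌈R⌉ : ℝ) := Int.le_ceil R
      rw [abs_le] at hb1 hb2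
      have c1 : (z.1 : ℝ) ≤ ((⌈R⌉ : ℤ) : ℝ) := by linarith [hb1.2]
      have c2 : ((-⌈R⌉ : ℤ) : ℝ) ≤ (z.1 : ℝ) := by push_cast; linarith [hb1.1]
      have c3 : (z.2 : ℝ) ≤ ((⌈R⌉ : ℤ) : ℝ) := by linarith [hb2.2]
      have c4 : ((-⌈R⌉ : ℤ) : ℝ) ≤ (z.2 : ℝ) := by push_cast; linarith [hb2.1]
      rw [Set.mem_Icc, Prod.le_def, Prod.le_def]
      exact ⟨⟨by exact_mod_cast c2, by exact_mod_cast c4⟩,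
        by exact_mod_cast c1, by exact_mod_cast c3⟩
    exact Set.Finite.subset (Set.finite_Icc _ _) hsub
  -- the margin δ
  obtain ⟨δ, hδ1, hδ⟩ : ∃ δ : ℝ, 1 < δ ∧
      ∀ z : ℤ × ℤ, latticeEmbed z ∉ Q → q (latticeEmbed z) ≤ R → δ ≤ μ (latticeEmbed z) := by
    rcases Set.eq_empty_or_nonempty {z : ℤ × ℤ | latticeEmbed z ∉ Q ∧ q (latticeEmbed z) ≤ R}
      with hSe | hSne
    · refine ⟨2, one_lt_two, fun z hz1 hz2 => absurd ?_ (Set.notMem_empty z)⟩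
      rw [← hSe]; exact ⟨hz1, hz2⟩
    · have hTne : (hSfin.toFinset.image (fun z => μ (latticeEmbed z))).Nonempty := by
        obtain ⟨z, hz⟩ := hSne
        exact ⟨μ (latticeEmbed z), Finset.mem_image_of_mem _ (hSfin.mem_toFinset.mpr hz)⟩
      refine ⟨(hSfin.toFinset.image (fun z => μ (latticeEmbed z))).min' hTne, ?_, ?_⟩
      · obtain ⟨x, hxT, hxe⟩ := Finset.mem_image.mp (Finset.min'_mem _ hTne)
        rw [← hxe]
        exact hμnot _ (hSfin.mem_toFinset.mp hxT).1
      · intro z hz1 hz2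
        exact Finset.min'_le _ _ (Finset.mem_image_of_mem _ (hSfin.mem_toFinset.mpr ⟨hz1, hz2⟩))
  -- the parameter ε
  obtain ⟨ε, hε0, hε1, hεδ⟩ : ∃ ε : ℝ, 0 < ε ∧ ε < 1 ∧ 1 < (1 - ε) * δ := by
    refine ⟨(δ - 1) / (2 * δ), div_pos (by linarith) (by linarith), ?_, ?_⟩
    · rw [div_lt_one (by linarith)]; linarith
    · have h : (1 - (δ - 1) / (2 * δ)) * δ = (δ + 1) / 2 := by
        field_simp; ring
      rw [h]; linarith
  have hεR : 0 < ε / R := div_pos hε0 hRpos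
  -- the body
  obtain ⟨g, hgeq⟩ : ∃ g : (ℝ × ℝ) → ℝ, ∀ x, g x = (1 - ε) * μ x + (ε / R) * q x :=
    ⟨_, fun _ => rfl⟩
  have hgcont : Continuous g := by
    have : Continuous fun x => (1 - ε) * μ x + (ε / R) * q x :=
      (continuous_const.mul hμcont).add (continuous_const.mul hqcont)
    simpa [funext hgeq] using this
  obtain ⟨B, hBmem⟩ : ∃ B : Set (ℝ × ℝ), ∀ x, x ∈ B ↔ g x ≤ 1 :=
    ⟨{x | g x ≤ 1}, fun _ => Iff.rfl⟩
  -- convexity combos for g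
  have hgcombo_le : ∀ (x y : ℝ × ℝ) (t : ℝ), 0 ≤ t → t ≤ 1 →
      g (t • x + (1 - t) • y) ≤ t * g x + (1 - t) * g y := by
    intro x y t ht ht1
    have h1 := hμcomb x y t ht ht1
    have h2 : q (t • x + (1 - t) • y) ≤ t * q x + (1 - t) * q y := by
      rw [hq_combo]
      linarith [mul_nonneg (mul_nonneg ht (by linarith : (0:ℝ) ≤ 1 - t))
        (by positivity : (0:ℝ) ≤ (x.1 - y.1) ^ 2 + (x.2 - y.2) ^ 2)]
    have e1 := mul_le_mul_of_nonneg_left h1 (by linarith : (0:ℝ) ≤ 1 - ε)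
    have e2 := mul_le_mul_of_nonneg_left h2 (le_of_lt hεR)
    simp only [hgeq]
    linarith [e1, e2]
  have hgcombo_lt : ∀ (x y : ℝ × ℝ), x ≠ y → ∀ t : ℝ, 0 < t → t < 1 →
      g (t • x + (1 - t) • y) < t * g x + (1 - t) * g y := by
    intro x y hxy t ht ht1
    have h1 := hμcomb x y t ht.le ht1.le
    have hne : 0 < (x.1 - y.1) ^ 2 + (x.2 - y.2) ^ 2 := by
      have h : x.1 ≠ y.1 ∨ x.2 ≠ y.2 := by
        by_contra hcon
        push_neg at hcon
        exact hxy (Prod.ext hcon.1 hcon.2)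
      rcases h with h | h
      · have h' : x.1 - y.1 ≠ 0 := sub_ne_zero.mpr h
        linarith [sq_pos_of_ne_zero h', sq_nonneg (x.2 - y.2)]
      · have h' : x.2 - y.2 ≠ 0 := sub_ne_zero.mpr h
        linarith [sq_pos_of_ne_zero h', sq_nonneg (x.1 - y.1)]
    have h2 : q (t • x + (1 - t) • y) < t * q x + (1 - t) * q y := by
      rw [hq_combo]
      linarith [mul_pos (mul_pos ht (by linarith : (0:ℝ) < 1 - t)) hne]
    have e1 := mul_le_mul_of_nonneg_left h1 (by linarith : (0:ℝ) ≤ 1 - ε)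
    have e2 := (mul_lt_mul_iff_right₀ hεR).mpr h2
    simp only [hgeq]
    linarith [e1, e2]
  -- B is convex
  have hBconv : Convex ℝ B := by
    intro x hx y hy s t hs ht hst
    rw [hBmem] at hx hy ⊢
    have hts : s = 1 - t := by linarith
    subst hts
    have h1t : (1 : ℝ) - (1 - t) = t := by ring
    calc g ((1 - t) • x + t • y) = g ((1 - t) • x + (1 - (1 - t)) • y) := by rw [h1t]
      _ ≤ (1 - t) * g x + (1 - (1 - t)) * g y :=
          hgcombo_le x y (1 - t) (by linarith) (by linarith)
      _ ≤ (1 - t) * 1 + (1 - (1 - t)) * 1 := by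
          apply add_le_add <;> apply mul_le_mul_of_nonneg_left <;>
            first | assumption | linarith
      _ = 1 := by ring
  -- B is closed and bounded, hence compact
  have hBset : B = {x | g x ≤ 1} := Set.ext fun x => by rw [hBmem]; rfl
  have hBclosed : IsClosed B := by
    rw [hBset]; exact isClosed_le hgcont continuous_const
  have hqB : ∀ x ∈ B, q x ≤ R / ε := by
    intro x hx
    rw [hBmem, hgeq] at hx
    have h1 : (ε / R) * q x ≤ 1 := by
      nlinarith [mul_nonneg (by linarith : (0:ℝ) ≤ 1 - ε) (hμnonneg x)]
    rw [div_mul_eq_mul_div, div_le_one hRpos] at h1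
    rw [le_div_iff₀ hε0]
    linarith
  have hBcomp : IsCompact B := by
    apply Metric.isCompact_of_isClosed_isBounded hBclosed
    rw [Metric.isBounded_iff_subset_closedBall 0]
    refine ⟨Real.sqrt (R / ε), fun x hx => ?_⟩
    have hq' := hqB x hx
    rw [hqeq] at hq'
    have hb1 : |x.1| ≤ Real.sqrt (R / ε) := by
      rw [← Real.sqrt_sq_eq_abs]
      apply Real.sqrt_le_sqrt
      nlinarith [sq_nonneg x.2]
    have hb2 : |x.2| ≤ Real.sqrt (R / ε) := by
      rw [← Real.sqrt_sq_eq_abs]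
      apply Real.sqrt_le_sqrt
      nlinarith [sq_nonneg x.1]
    rw [Metric.mem_closedBall, dist_zero_right, Prod.norm_def]
    simp only [Real.norm_eq_abs]
    exact max_le hb1 hb2
  -- symmetry
  have hBsymm : ∀ x : ℝ × ℝ, x ∈ B ↔ -x ∈ B := by
    intro x
    rw [hBmem, hBmem, hgeq, hgeq, hμneg, hqneg]
  -- interior: the strict sublevel set
  have hopen : IsOpen {x : ℝ × ℝ | g x < 1} := isOpen_lt hgcont continuous_const
  have hlt_sub : {x : ℝ × ℝ | g x < 1} ⊆ interior B := by
    apply interior_maximal _ hopen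
    intro x hx
    rw [hBmem]
    exact le_of_lt hx
  have h0B : (0 : ℝ × ℝ) ∈ interior B := by
    apply hlt_sub
    show g 0 < 1
    rw [hgeq, hμzero, hqeq]
    norm_num
  -- strict convexity
  have hstrict : ∀ x ∈ B, ∀ y ∈ B, x ≠ y → ∀ t : ℝ, t ∈ Set.Ioo (0:ℝ) 1 →
      t • x + (1 - t) • y ∈ interior B := by
    intro x hx y hy hxy t ⟨ht0, ht1⟩
    apply hlt_sub
    show g (t • x + (1 - t) • y) < 1
    rw [hBmem] at hx hy
    have := hgcombo_lt x y hxy t ht0 ht1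
    nlinarith [mul_le_mul_of_nonneg_left hx ht0.le,
      mul_le_mul_of_nonneg_left hy (by linarith : (0:ℝ) ≤ 1 - t)]
  -- Q ⊆ B
  have hQB : Q ⊆ B := by
    intro x hx
    rw [hBmem, hgeq]
    have h1 : μ x ≤ 1 := hμmem x hx
    have h2 : q x ≤ R := hqR x hx
    have h3 : (ε / R) * q x ≤ ε := by
      calc (ε / R) * q x ≤ (ε / R) * R := mul_le_mul_of_nonneg_left h2 (le_of_lt hεR)
        _ = ε := div_mul_cancel₀ ε (ne_of_gt hRpos)
    nlinarith [mul_le_mul_of_nonneg_left h1 (by linarith : (0:ℝ) ≤ 1 - ε)]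
  -- lattice points
  have hlat : ∀ z : ℤ × ℤ, latticeEmbed z ∈ B ↔ latticeEmbed z ∈ Q := by
    intro z
    constructor
    · intro hzB
      by_contra hzQ
      have hμz : 1 < μ (latticeEmbed z) := hμnot _ hzQ
      rw [hBmem, hgeq] at hzB
      rcases le_or_gt (q (latticeEmbed z)) R with hqz | hqz
      · have := hδ z hzQ hqz
        nlinarith [hqnonneg (latticeEmbed z)]
      · have h1 : (1 - ε) * μ (latticeEmbed z) > 1 - ε := by nlinarith
        have h2 : (ε / R) * q (latticeEmbed z) > ε := by
          have := (mul_lt_mul_iff_right₀ hεR).mpr hqz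
          rwa [div_mul_cancel₀ ε (ne_of_gt hRpos)] at this
        linarith
    · intro hzQ
      exact hQB hzQ
  exact ⟨B, hBcomp, hBconv, hBsymm, h0B, hstrict, hQB, hlat⟩

end
end
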